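/- arXiv:2302.12870 — 4 statements merged into one kernel-verified Lean document; each statement's English description precedes it below -/
import Mathlib

section
/- Let k ≤ k' be a field extension and C a k-coalgebra. For a k-linear subspace V ≤ C, let C_V denote the largest subcoalgebra of C contained in V. Then the canonical inclusion k' ⊗_k C_V ⊆ (k' ⊗_k C)_{k' ⊗_k V} is an equality: scalar extension along field extensions preserves the largest subcoalgebra contained in a given subspace. -/
open TensorProduct

/-- A submodule `D ≤ C` is a subcoalgebra with respect to a comultiplication `δ` if
`δ(D)` is contained in the image of `D ⊗ D → C ⊗ C`. -/
def IsSubcoalg {k C : Type*} [CommRing k] [AddCommGroup C] [Module k C]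
    (δ : C →ₗ[k] C ⊗[k] C) (D : Submodule k C) : Prop :=
  ∀ d ∈ D, δ d ∈ LinearMap.range (TensorProduct.map D.subtype D.subtype)

/-- The largest subcoalgebra (with respect to a comultiplication `δ`) contained in a
subspace `V ≤ C`: the sup of all subcoalgebras contained in `V`. -/
noncomputable def coalgCore {k C : Type*} [CommRing k] [AddCommGroup C] [Module k C]
    (δ : C →ₗ[k] C ⊗[k] C) (V : Submodule k C) : Submodule k C :=
  sSup {D : Submodule k C | IsSubcoalg δ D ∧ D ≤ V}

/-- The comultiplication on the base change `k' ⊗[k] C` of a `k`-coalgebra `C` along a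
field extension `k ≤ k'`. -/
noncomputable def bcComul (k k' C : Type*) [Field k] [Field k'] [Algebra k k']
    [AddCommGroup C] [Module k C] [Coalgebra k C] :
    (k' ⊗[k] C) →ₗ[k'] (k' ⊗[k] C) ⊗[k'] (k' ⊗[k] C) :=
  (TensorProduct.AlgebraTensorModule.distribBaseChange k k' C C).toLinearMap ∘ₗ
    (Coalgebra.comul (R := k) (A := C)).baseChange k'

namespace StmtAux

theorem coalgCore_le {k C : Type*} [CommRing k] [AddCommGroup C] [Module k C]
    (δ : C →ₗ[k] C ⊗[k] C) (V : Submodule k C) : coalgCore δ V ≤ V :=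
  sSup_le fun _ h => h.2

theorem rangeMap_mono {k C : Type*} [CommRing k] [AddCommGroup C] [Module k C]
    {D D' : Submodule k C} (h : D ≤ D') :
    LinearMap.range (TensorProduct.map D.subtype D.subtype) ≤
      LinearMap.range (TensorProduct.map D'.subtype D'.subtype) := by
  rw [TensorProduct.range_map_eq_span_tmul, TensorProduct.range_map_eq_span_tmul]
  apply Submodule.span_mono
  rintro x ⟨m, n, rfl⟩
  exact ⟨⟨m.1, h m.2⟩, ⟨n.1, h n.2⟩, rfl⟩

theorem isSubcoalg_coalgCore {k C : Type*} [CommRing k] [AddCommGroup C] [Module k C]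
    (δ : C →ₗ[k] C ⊗[k] C) (V : Submodule k C) : IsSubcoalg δ (coalgCore δ V) := by
  intro d hd
  have hle : coalgCore δ V ≤ Submodule.comap δ
      (LinearMap.range (TensorProduct.map (coalgCore δ V).subtype (coalgCore δ V).subtype)) := by
    apply sSup_le
    rintro D ⟨hD, hDV⟩ x hx
    exact rangeMap_mono (le_sSup (Set.mem_setOf.2 ⟨hD, hDV⟩)) (hD x hx)
  exact hle hd

section Field

variable {k k' : Type*} [Field k] [Field k'] [Algebra k k']
variable {M N : Type*} [AddCommGroup M] [Module k M] [AddCommGroup N] [Module k N]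

theorem baseChange_eq_range (W : Submodule k M) :
    W.baseChange k' = LinearMap.range (W.subtype.baseChange k') := by
  apply le_antisymm
  · rw [Submodule.baseChange_eq_span, Submodule.span_le]
    rintro x ⟨m, hm, rfl⟩
    exact ⟨1 ⊗ₜ ⟨m, hm⟩, rfl⟩
  · rintro x ⟨y, rfl⟩
    induction y using TensorProduct.induction_on with
    | zero => simp
    | tmul a m => simpa using Submodule.tmul_mem_baseChange_of_mem a m.2
    | add x y hx hy => rw [map_add]; exact Submodule.add_mem _ hx hy

theorem baseChange_mono {W W' : Submodule k M} (h : W ≤ W') :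
    W.baseChange k' ≤ W'.baseChange k' :=
  by rw [Submodule.baseChange_eq_span, Submodule.baseChange_eq_span]; exact Submodule.span_mono (Set.image_mono h)

variable {ι : Type*}

/-- `k' ⊗[k] M` is isomorphic to finitely supported families in `M`, given a basis of `k'`. -/
noncomputable def reprT (b : Module.Basis ι k k') (M : Type*) [AddCommGroup M] [Module k M] :
    k' ⊗[k] M ≃ₗ[k] (ι →₀ M) :=
  letI : DecidableEq ι := Classical.decEq ι
  TensorProduct.congr b.repr (LinearEquiv.refl k M) ≪≫ₗ TensorProduct.finsuppScalarLeft k M ι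

/-- The `j`-th coefficient of an element of `k' ⊗[k] M` with respect to a basis of `k'`. -/
noncomputable def coeff (b : Module.Basis ι k k') (M : Type*) [AddCommGroup M] [Module k M] (j : ι) :
    k' ⊗[k] M →ₗ[k] M where
  toFun x := reprT b M x j
  map_add' x y := by simp
  map_smul' c x := by simp

theorem coeff_apply (b : Module.Basis ι k k') (j : ι) (x : k' ⊗[k] M) :
    coeff b M j x = reprT b M x j := rfl

theorem coeff_tmul (b : Module.Basis ι k k') (j : ι) (a : k') (m : M) :
    coeff b M j (a ⊗ₜ m) = b.repr a j • m := by
  simp [coeff, reprT]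

theorem coeff_natural (b : Module.Basis ι k k') (g : M →ₗ[k] N) (j : ι) (x : k' ⊗[k] M) :
    coeff b N j (g.baseChange k' x) = g (coeff b M j x) := by
  induction x using TensorProduct.induction_on with
  | zero => simp
  | tmul a m => simp [coeff_tmul]
  | add x y hx hy => rw [map_add, map_add, map_add, hx, hy, map_add]

theorem coeff_mem (b : Module.Basis ι k k') {W : Submodule k M} {x : k' ⊗[k] M}
    (hx : x ∈ W.baseChange k') (j : ι) : coeff b M j x ∈ W := by
  rw [baseChange_eq_range] at hx
  obtain ⟨y, rfl⟩ := hx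
  rw [coeff_natural b W.subtype j y]
  exact (coeff b W j y).2

theorem reprT_symm_eq (b : Module.Basis ι k k') (f : ι →₀ M) :
    (reprT b M).symm f = f.sum fun j m => b j ⊗ₜ[k] m := by
  induction f using Finsupp.induction_linear with
  | zero => simp
  | add f g hf hg =>
      rw [map_add, hf, hg,
        Finsupp.sum_add_index' (fun j => tmul_zero M (b j)) (fun j x y => tmul_add (b j) x y)]
  | single j m =>
      rw [Finsupp.sum_single_index]
      · simp [reprT, TensorProduct.congr_symm_tmul, Module.Basis.repr_symm_single_one]
      · exact tmul_zero M (b j)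

theorem mem_baseChange_of_coeff (b : Module.Basis ι k k') {W : Submodule k M} {x : k' ⊗[k] M}
    (h : ∀ j, coeff b M j x ∈ W) : x ∈ W.baseChange k' := by
  have hx : x = (reprT b M x).sum fun j m => b j ⊗ₜ[k] m := by
    rw [← reprT_symm_eq b, LinearEquiv.symm_apply_apply]
  rw [hx]
  refine Submodule.sum_mem _ fun j _ => ?_
  exact Submodule.tmul_mem_baseChange_of_mem _ (h j)

theorem pair_mem {D : Submodule k M} {x y : k' ⊗[k] M}
    (hx : x ∈ D.baseChange k') (hy : y ∈ D.baseChange k') :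
    x ⊗ₜ[k'] y ∈ Submodule.map
      (TensorProduct.AlgebraTensorModule.distribBaseChange k k' M M).toLinearMap
      ((LinearMap.range (TensorProduct.map D.subtype D.subtype)).baseChange k') := by
  rw [baseChange_eq_range] at hx hy
  obtain ⟨u, rfl⟩ := hx
  obtain ⟨v, rfl⟩ := hy
  induction u using TensorProduct.induction_on with
  | zero => simp
  | add u u' hu hu' => rw [map_add, add_tmul]; exact Submodule.add_mem _ hu hu'
  | tmul a d =>
    induction v using TensorProduct.induction_on with
    | zero => simp
    | add v v' hv hv' => rw [map_add, tmul_add]; exact Submodule.add_mem _ hv hv'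
    | tmul c d' =>
      refine ⟨(c * a) ⊗ₜ (d.1 ⊗ₜ d'.1),
        Submodule.tmul_mem_baseChange_of_mem _ ⟨d ⊗ₜ d', rfl⟩, ?_⟩
      have h1 : (TensorProduct.AlgebraTensorModule.distribBaseChange k k' M M)
          ((c * a) ⊗ₜ (d.1 ⊗ₜ d'.1)) = ((c * a) ⊗ₜ d.1) ⊗ₜ[k'] ((1 : k') ⊗ₜ d'.1) := rfl
      have h2 : (D.subtype.baseChange k') (a ⊗ₜ[k] d) ⊗ₜ[k'] (D.subtype.baseChange k') (c ⊗ₜ[k] d')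
          = (a ⊗ₜ[k] d.1) ⊗ₜ[k'] (c ⊗ₜ[k] d'.1) := by
        simp
      rw [LinearEquiv.coe_coe, h1, h2]
      rw [show (c : k') ⊗ₜ[k] d'.1 = c • ((1 : k') ⊗ₜ[k] d'.1) by
        rw [smul_tmul', smul_eq_mul, mul_one]]
      rw [tmul_smul, smul_tmul', smul_tmul', smul_eq_mul]

end Field

end StmtAux

open StmtAux in
theorem isSubcoalg_baseChange {k k' C : Type*} [Field k] [Field k'] [Algebra k k']
    [AddCommGroup C] [Module k C] [Coalgebra k C] {D : Submodule k C}
    (hD : IsSubcoalg (Coalgebra.comul (R := k) (A := C)) D) :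
    IsSubcoalg (bcComul k k' C) (D.baseChange k') := by
  set R := LinearMap.range (TensorProduct.map (D.baseChange k').subtype (D.baseChange k').subtype)
  have hle : D.baseChange k' ≤ Submodule.comap (bcComul k k' C) R := by
    rw [Submodule.baseChange_eq_span, Submodule.span_le]
    rintro x ⟨m, hm, rfl⟩
    obtain ⟨q, hq⟩ := hD m hm
    have : bcComul k k' C ((1 : k') ⊗ₜ m) =
        (TensorProduct.AlgebraTensorModule.distribBaseChange k k' C C)
          ((1 : k') ⊗ₜ (TensorProduct.map D.subtype D.subtype q)) := by
      simp [bcComul, hq]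
    show bcComul k k' C ((1 : k') ⊗ₜ m) ∈ R
    rw [this]
    clear this hq hm
    induction q using TensorProduct.induction_on with
    | zero => simp
    | add q q' hq hq' =>
        rw [map_add, tmul_add, map_add]; exact Submodule.add_mem _ hq hq'
    | tmul d d' =>
        refine ⟨(⟨(1 : k') ⊗ₜ d.1, Submodule.tmul_mem_baseChange_of_mem 1 d.2⟩ : D.baseChange k')
          ⊗ₜ[k'] (⟨(1 : k') ⊗ₜ d'.1, Submodule.tmul_mem_baseChange_of_mem 1 d'.2⟩ :
            D.baseChange k'), rfl⟩
  exact fun d hd => hle hd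

open StmtAux in
/-- Scalar extension along a field extension preserves the largest subcoalgebra
contained in a given subspace: `k' ⊗[k] C_V = (k' ⊗[k] C)_{k' ⊗[k] V}`. -/
theorem stmt_8 {k k' C : Type*} [Field k] [Field k'] [Algebra k k']
    [AddCommGroup C] [Module k C] [Coalgebra k C] (V : Submodule k C) :
    (coalgCore (Coalgebra.comul (R := k) (A := C)) V).baseChange k' =
      coalgCore (bcComul k k' C) (V.baseChange k') := by
  set δ := Coalgebra.comul (R := k) (A := C) with hδ
  set E := coalgCore (bcComul k k' C) (V.baseChange k') with hE
  apply le_antisymm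
  · exact le_sSup ⟨isSubcoalg_baseChange (isSubcoalg_coalgCore δ V),
      baseChange_mono (coalgCore_le δ V)⟩
  · let b := Module.Basis.ofVectorSpace k k'
    set D₀ : Submodule k C :=
      ⨆ j, Submodule.map (coeff b C j) (E.restrictScalars k) with hD₀
    have hcoeff : ∀ {e : k' ⊗[k] C}, e ∈ E → ∀ j, coeff b C j e ∈ D₀ := by
      intro e he j
      exact le_iSup (fun j => Submodule.map (coeff b C j) (E.restrictScalars k)) j
        (Submodule.mem_map_of_mem he)
    have hED : ∀ e ∈ E, e ∈ D₀.baseChange k' := fun e he =>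
      mem_baseChange_of_coeff b fun j => hcoeff he j
    have hEV : E ≤ V.baseChange k' := coalgCore_le _ _
    have hD₀V : D₀ ≤ V := by
      refine iSup_le fun j => Submodule.map_le_iff_le_comap.2 fun e he => ?_
      exact coeff_mem b (hEV he) j
    have hsub : IsSubcoalg δ D₀ := by
      set Q := LinearMap.range (TensorProduct.map D₀.subtype D₀.subtype) with hQ
      have : D₀ ≤ Submodule.comap δ Q := by
        refine iSup_le fun j => Submodule.map_le_iff_le_comap.2 fun e he => ?_
        have he' : e ∈ E := he
        have h1 : bcComul k k' C e ∈
            LinearMap.range (TensorProduct.map E.subtype E.subtype) :=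
          isSubcoalg_coalgCore _ _ e he'
        have h2 : LinearMap.range (TensorProduct.map E.subtype E.subtype) ≤
            Submodule.map
              (TensorProduct.AlgebraTensorModule.distribBaseChange k k' C C).toLinearMap
              (Q.baseChange k') := by
          rw [TensorProduct.range_map_eq_span_tmul, Submodule.span_le]
          rintro x ⟨m, n, rfl⟩
          exact pair_mem (hED _ m.2) (hED _ n.2)
        obtain ⟨q, hqmem, hq⟩ := h2 h1
        have h3 : δ.baseChange k' e = q := by
          apply (TensorProduct.AlgebraTensorModule.distribBaseChange k k' C C).injective
          have h0 : (TensorProduct.AlgebraTensorModule.distribBaseChange k k' C C)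
              (δ.baseChange k' e) = bcComul k k' C e := rfl
          exact h0.trans hq.symm
        have h4 : δ (coeff b C j e) = coeff b (C ⊗[k] C) j (δ.baseChange k' e) :=
          (coeff_natural b δ j e).symm
        show δ (coeff b C j e) ∈ Q
        rw [h4, h3]
        exact coeff_mem b hqmem j
      exact fun d hd => this hd
    have hfin : D₀ ≤ coalgCore δ V := le_sSup ⟨hsub, hD₀V⟩
    exact fun x hx => baseChange_mono hfin (hED x hx)
end

section
/- Let k ≤ k' be a field extension, V a k-vector space, and V_i ≤ V, i ∈ I, an arbitrary family of k-subspaces. Then inside k' ⊗_k V one has k' ⊗_k (⋂_i V_i) = ⋂_i (k' ⊗_k V_i). -/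
open TensorProduct

section Aux

variable {k k' : Type*} [Field k] [Field k'] [Algebra k k']
  {V : Type*} [AddCommGroup V] [Module k V]
  {ι : Type*} [DecidableEq ι] (b : Module.Basis ι k k')

/-- Coordinate decomposition of `k' ⊗ V` with respect to a `k`-basis of `k'`. -/
noncomputable def coordEquiv : k' ⊗[k] V ≃ₗ[k] (ι →₀ V) :=
  (LinearEquiv.rTensor V b.repr).trans (TensorProduct.finsuppScalarLeft k V ι)

lemma coordEquiv_tmul (a : k') (v : V) (i : ι) :
    coordEquiv b (a ⊗ₜ[k] v) i = b.repr a i • v := by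
  simp [coordEquiv, LinearEquiv.rTensor, TensorProduct.finsuppScalarLeft_apply_tmul_apply]

lemma coordEquiv_symm_single (i : ι) (v : V) :
    (coordEquiv b).symm (Finsupp.single i v) = (b i) ⊗ₜ[k] v := by
  rw [LinearEquiv.symm_apply_eq]
  ext j
  simp [coordEquiv_tmul, Finsupp.single_apply]

lemma mem_baseChange_iff_coord (p : Submodule k V) (x : k' ⊗[k] V) :
    x ∈ p.baseChange k' ↔ ∀ i, coordEquiv b x i ∈ p := by
  constructor
  · intro hx i
    rw [Submodule.baseChange_eq_span, Submodule.mem_span_set'] at hx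
    obtain ⟨n, f, g, rfl⟩ := hx
    simp only [map_sum, Finsupp.coe_finset_sum, Finset.sum_apply]
    refine Submodule.sum_mem _ fun j _ => ?_
    obtain ⟨-, ⟨m, hm, rfl⟩⟩ := g j
    have : f j • (TensorProduct.mk k k' V 1 m) = f j ⊗ₜ[k] m := by
      simp [TensorProduct.mk, TensorProduct.smul_tmul']
    rw [this, coordEquiv_tmul]
    exact p.smul_mem _ hm
  · intro hx
    have : x = ((coordEquiv b).symm) (coordEquiv b x) := by simp
    rw [this, ← Finsupp.sum_single (coordEquiv b x), map_finsuppSum]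
    refine Submodule.sum_mem _ fun i hi => ?_
    simp only [coordEquiv_symm_single]
    exact Submodule.tmul_mem_baseChange_of_mem _ (hx i)

end Aux

/-- Scalar extension along a field extension `k ≤ k'` preserves arbitrary
intersections of subspaces: `k' ⊗ₖ (⋂ᵢ Vᵢ) = ⋂ᵢ (k' ⊗ₖ Vᵢ)` inside `k' ⊗ₖ V`. -/
theorem stmt_9 {k k' : Type*} [Field k] [Field k'] [Algebra k k']
    {V : Type*} [AddCommGroup V] [Module k V] {I : Type*} (W : I → Submodule k V) :
    (⨅ i, W i).baseChange k' = ⨅ i, (W i).baseChange k' := by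
  classical
  let b := Module.Free.chooseBasis k k'
  ext x
  simp only [Submodule.mem_iInf, mem_baseChange_iff_coord b]
  exact forall_comm
end

section
/- Let π : H → H' be a morphism of Hopf algebras over a field k. If the only elements h ∈ H satisfying (id ⊗ π)Δ(h) = h ⊗ 1 are the scalar multiples of 1, then for every right H-comodule V, every H'-coinvariant element of V (under the corestricted coaction) is an H-coinvariant. -/
open TensorProduct

/-- Naturality: applying a functional on the left commutes with a map on the right. -/
private lemma aux_nat {k V A B : Type*} [CommRing k] [AddCommGroup V] [Module k V]
    [AddCommGroup A] [Module k A] [AddCommGroup B] [Module k B]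
    (f : V →ₗ[k] k) (g : A →ₗ[k] B) (x : V ⊗[k] A) :
    (TensorProduct.lid k B) ((f.rTensor B) ((LinearMap.lTensor V g) x)) =
      g ((TensorProduct.lid k A) ((f.rTensor A) x)) := by
  induction x using TensorProduct.induction_on with
  | zero => simp
  | tmul w a => simp
  | add x y hx hy => simp [hx, hy]

private lemma aux_assoc_one {k V A B : Type*} [CommRing k] [AddCommGroup V] [Module k V]
    [AddCommGroup A] [Module k A] [AddCommGroup B] [Module k B]
    (f : V →ₗ[k] k) (x : V ⊗[k] A) (b : B) :
    (TensorProduct.lid k (A ⊗[k] B)) ((f.rTensor (A ⊗[k] B))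
      ((TensorProduct.assoc k V A B) (x ⊗ₜ[k] b))) =
    ((TensorProduct.lid k A) ((f.rTensor A) x)) ⊗ₜ[k] b := by
  induction x using TensorProduct.induction_on with
  | zero => simp
  | tmul w a => simp [TensorProduct.smul_tmul']
  | add x y hx hy => simp only [add_tmul, map_add, hx, hy]

private lemma aux_assoc_nat {k V A B B' : Type*} [CommRing k] [AddCommGroup V] [Module k V]
    [AddCommGroup A] [Module k A] [AddCommGroup B] [Module k B] [AddCommGroup B'] [Module k B']
    (g : B →ₗ[k] B') (t : (V ⊗[k] A) ⊗[k] B) :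
    (LinearMap.lTensor V (LinearMap.lTensor A g)) ((TensorProduct.assoc k V A B) t) =
      (TensorProduct.assoc k V A B') ((LinearMap.lTensor (V ⊗[k] A) g) t) := by
  have : (LinearMap.lTensor V (LinearMap.lTensor A g)) ∘ₗ
      (TensorProduct.assoc k V A B).toLinearMap =
      (TensorProduct.assoc k V A B').toLinearMap ∘ₗ (LinearMap.lTensor (V ⊗[k] A) g) := by
    apply TensorProduct.ext_threefold
    intro v a b
    simp
  exact LinearMap.congr_fun this t

/-- If the only `H'`-coinvariants of a Hopf algebra morphism `π : H → H'` inside `H`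
(comodule over itself via `Δ`) are the scalar multiples of `1`, then for every right
`H`-comodule `V` (given by a coassociative counital coaction `ρ`), every
`H'`-coinvariant of `V` is an `H`-coinvariant. -/
theorem stmt_12 {k H H' : Type*} [Field k] [Ring H] [Ring H']
    [HopfAlgebra k H] [HopfAlgebra k H'] (π : H →ₐc[k] H')
    (πL : H →ₗ[k] H') (hπL : ∀ h, πL h = π h)
    (hH : ∀ h : H, (LinearMap.lTensor H πL) (Coalgebra.comul h) = h ⊗ₜ[k] (1 : H') →
      ∃ c : k, h = c • (1 : H)) :
    ∀ (V : Type*) [AddCommGroup V] [Module k V] (ρ : V →ₗ[k] V ⊗[k] H),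
      ((TensorProduct.assoc k V H H).toLinearMap ∘ₗ (ρ.rTensor H) ∘ₗ ρ =
        (LinearMap.lTensor V (Coalgebra.comul (R := k) (A := H))) ∘ₗ ρ) →
      ((TensorProduct.rid k V).toLinearMap ∘ₗ
        (LinearMap.lTensor V (Coalgebra.counit (R := k) (A := H))) ∘ₗ ρ = LinearMap.id) →
      ∀ v : V, (LinearMap.lTensor V πL) (ρ v) = v ⊗ₜ[k] (1 : H') →
        ρ v = v ⊗ₜ[k] (1 : H) := by
  intro V _ _ ρ hcoassoc hcounit v hv
  classical
  by_cases hone : (1 : H) = 0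
  · -- trivial Hopf algebra: H is a subsingleton, so V ⊗ H is trivial
    haveI : Subsingleton H := subsingleton_of_zero_eq_one hone.symm
    have hall : ∀ x : V ⊗[k] H, x = 0 := by
      intro x
      induction x using TensorProduct.induction_on with
      | zero => rfl
      | tmul w a => rw [Subsingleton.elim a 0, TensorProduct.tmul_zero]
      | add x y hx hy => rw [hx, hy, add_zero]
    rw [hall (ρ v), hall (v ⊗ₜ[k] (1 : H))]
  -- main case
  have hinj : ∀ c c' : k, c • (1 : H) = c' • (1 : H) → c = c' := by
    intro c c' hcc
    have hsub : (c - c') • (1 : H) = 0 := by rw [sub_smul, hcc, sub_self]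
    rcases smul_eq_zero.mp hsub with h | h
    · exact sub_eq_zero.mp h
    · exact absurd h hone
  set ι := Module.Basis.ofVectorSpaceIndex k V
  set b : Module.Basis ι k V := Module.Basis.ofVectorSpace k V with hb
  set y : V ⊗[k] H := ρ v with hy
  set e : V ⊗[k] H ≃ₗ[k] (ι →₀ H) :=
    (TensorProduct.congr b.repr (LinearEquiv.refl k H)).trans
      (TensorProduct.finsuppScalarLeft k H ι) with he
  -- relate e with coordinate functionals
  have heF : ∀ (x : V ⊗[k] H) (i : ι),
      e x i = (TensorProduct.lid k H) (((b.coord i).rTensor H) x) := by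
    intro x i
    induction x using TensorProduct.induction_on with
    | zero => simp
    | tmul w a => simp [he, Module.Basis.coord]
    | add x z hx hz => simp only [map_add, Finsupp.add_apply, hx, hz]
  -- each coordinate of y is an H'-coinvariant of H, hence a scalar multiple of 1
  have hco : ∀ i : ι, ∃ c : k, e y i = c • (1 : H) := by
    intro i
    apply hH
    have key : (LinearMap.lTensor V (Coalgebra.comul (R := k) (A := H))) y =
        (TensorProduct.assoc k V H H) ((ρ.rTensor H) y) := by
      have h := LinearMap.congr_fun hcoassoc v
      simp only [LinearMap.comp_apply, LinearEquiv.coe_coe] at h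
      rw [hy]
      exact h.symm
    have key2 : (LinearMap.lTensor (V ⊗[k] H) πL) ((ρ.rTensor H) y) = y ⊗ₜ[k] (1 : H') := by
      have h := LinearMap.congr_fun
        ((LinearMap.lTensor_comp_rTensor (f := ρ) (g := πL)).trans
          (LinearMap.rTensor_comp_lTensor (f := ρ) (g := πL)).symm) y
      simp only [LinearMap.comp_apply] at h
      rw [h, hv, LinearMap.rTensor_tmul, hy]
    have c1 : Coalgebra.comul (R := k) (e y i) =
        (TensorProduct.lid k (H ⊗[k] H)) (((b.coord i).rTensor (H ⊗[k] H))
          ((LinearMap.lTensor V (Coalgebra.comul (R := k) (A := H))) y)) := by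
      rw [heF y i]
      exact (aux_nat _ _ y).symm
    have c2 : (LinearMap.lTensor H πL) (Coalgebra.comul (R := k) (e y i)) =
        (TensorProduct.lid k (H ⊗[k] H')) (((b.coord i).rTensor (H ⊗[k] H'))
          ((LinearMap.lTensor V (LinearMap.lTensor H πL))
            ((LinearMap.lTensor V (Coalgebra.comul (R := k) (A := H))) y))) := by
      rw [c1]
      exact (aux_nat (b.coord i) (LinearMap.lTensor H πL) _).symm
    have c3 : (LinearMap.lTensor V (LinearMap.lTensor H πL))
        ((LinearMap.lTensor V (Coalgebra.comul (R := k) (A := H))) y) =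
        (TensorProduct.assoc k V H H') (y ⊗ₜ[k] (1 : H')) := by
      rw [key, aux_assoc_nat, key2]
    rw [c2, c3, aux_assoc_one, ← heF]
  -- build the coefficient finsupp
  have hphi0 : (fun h : H => if hh : ∃ c : k, h = c • (1 : H) then hh.choose else 0) 0 = 0 := by
    have hh : ∃ c : k, (0 : H) = c • (1 : H) := ⟨0, by simp⟩
    show (if hh : ∃ c : k, (0 : H) = c • (1 : H) then hh.choose else 0) = 0
    rw [dif_pos hh]
    refine hinj _ 0 ?_
    rw [← hh.choose_spec]
    simp
  set d : ι →₀ k := Finsupp.mapRange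
    (fun h : H => if hh : ∃ c : k, h = c • (1 : H) then hh.choose else 0) hphi0 (e y) with hd
  have hdspec : ∀ i : ι, d i • (1 : H) = e y i := by
    intro i
    rw [hd, Finsupp.mapRange_apply, dif_pos (hco i)]
    exact ((hco i).choose_spec).symm
  set v' : V := b.repr.symm d with hv'
  have hyv' : y = v' ⊗ₜ[k] (1 : H) := by
    apply e.injective
    ext i
    have h1 : e (v' ⊗ₜ[k] (1 : H)) i = (b.repr v') i • (1 : H) := by
      simp [he]
    rw [h1, hv', LinearEquiv.apply_symm_apply, hdspec]
  -- use counit axiom to identify v' with v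
  have hvv' : v = v' := by
    have h := LinearMap.congr_fun hcounit v
    simp only [LinearMap.comp_apply, LinearMap.id_apply, LinearEquiv.coe_coe] at h
    rw [← hy, hyv'] at h
    rw [← h]
    simp
  rw [hyv', hvv']
end

section
/- Let k ≤ k' be an infinite-degree field extension and (V_i)_{i ∈ I} an infinite family of nonzero k-vector spaces. Then the canonical k'-linear map k' ⊗_k (∏_i V_i) → ∏_i (k' ⊗_k V_i) is injective but not surjective. -/
open TensorProduct

section Aux

variable {k k' : Type*} [Field k] [Field k'] [Algebra k k']

/-- The coordinate equivalence `k' ⊗[k] M ≃ (ι →₀ M)` given by the canonical basis of `k'`. -/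
noncomputable def auxE (k k' : Type*) [Field k] [Field k'] [Algebra k k']
    (M : Type*) [AddCommGroup M] [Module k M] :
    k' ⊗[k] M ≃ₗ[k] (Module.Basis.ofVectorSpaceIndex k k' →₀ M) :=
  letI := Classical.decEq (Module.Basis.ofVectorSpaceIndex k k')
  (TensorProduct.congr (Module.Basis.ofVectorSpace k k').repr (LinearEquiv.refl k M)).trans
    (TensorProduct.finsuppScalarLeft k M _)

lemma auxE_tmul {M : Type*} [AddCommGroup M] [Module k M] (a : k') (m : M)
    (j : Module.Basis.ofVectorSpaceIndex k k') :
    auxE k k' M (a ⊗ₜ[k] m) j = (Module.Basis.ofVectorSpace k k').repr a j • m := by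
  simp [auxE]

lemma auxE_lTensor {M M' : Type*} [AddCommGroup M] [Module k M]
    [AddCommGroup M'] [Module k M'] (f : M →ₗ[k] M') (x : k' ⊗[k] M)
    (j : Module.Basis.ofVectorSpaceIndex k k') :
    auxE k k' M' (LinearMap.lTensor k' f x) j = f (auxE k k' M x j) := by
  induction x with
  | zero => simp
  | tmul a m => simp [auxE_tmul]
  | add x y hx hy => simp [map_add, hx, hy]

lemma piRightHom_eq_lTensor {I : Type*} (V : I → Type*) [∀ i, AddCommGroup (V i)]
    [∀ i, Module k (V i)] (x : k' ⊗[k] (∀ i, V i)) (i : I) :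
    TensorProduct.piRightHom k k' k' V x i = LinearMap.lTensor k' (LinearMap.proj i) x := by
  induction x with
  | zero => simp
  | tmul a m => simp
  | add x y hx hy => simp [map_add, hx, hy]

end Aux

theorem stmt_18 {k k' : Type*} [Field k] [Field k'] [Algebra k k']
    (hinf : ¬ Module.Finite k k') {I : Type*} [Infinite I]
    (V : I → Type*) [∀ i, AddCommGroup (V i)] [∀ i, Module k (V i)]
    [∀ i, Nontrivial (V i)] :
    Function.Injective (TensorProduct.piRightHom k k' k' V) ∧
      ¬ Function.Surjective (TensorProduct.piRightHom k k' k' V) := by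
  classical
  set ι := Module.Basis.ofVectorSpaceIndex k k' with hι
  set b := Module.Basis.ofVectorSpace k k' with hb
  constructor
  · -- injectivity
    rw [injective_iff_map_eq_zero]
    intro x hx
    have h0 : auxE k k' (∀ i, V i) x = 0 := by
      ext j i
      have := auxE_lTensor (k' := k') (LinearMap.proj (φ := V) i) x j
      rw [← piRightHom_eq_lTensor V x i, hx] at this
      simpa using this.symm
    simpa using congrArg (auxE k k' (∀ i, V i)).symm h0
  · -- non-surjectivity
    intro hsurj
    -- ι is infinite
    haveI : Infinite ι := by
      rw [← not_finite_iff_infinite]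
      intro hfin
      exact hinf (Module.Finite.of_basis b)
    obtain e := Infinite.natEmbedding I
    obtain u := Infinite.natEmbedding ι
    -- a nonzero vector in each V i
    have hv : ∀ i, ∃ w : V i, w ≠ 0 := fun i => exists_ne 0
    set v : ∀ i, V i := fun i => Classical.choose (hv i) with hvdef
    have hvne : ∀ i, v i ≠ 0 := fun i => Classical.choose_spec (hv i)
    -- the target element
    set y : ∀ i, k' ⊗[k] V i := fun i =>
      if h : ∃ n, e n = i then (b (u (Classical.choose h)) : k') ⊗ₜ[k] v i else 0 with hy
    obtain ⟨x, hx⟩ := hsurj y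
    have key : ∀ n : ℕ, auxE k k' (∀ i, V i) x (u n) ≠ 0 := by
      intro n h0
      have h1 : y (e n) = LinearMap.lTensor k' (LinearMap.proj (e n)) x := by
        rw [← piRightHom_eq_lTensor V x (e n), hx]
      have hex : ∃ m, e m = e n := ⟨n, rfl⟩
      have hch : Classical.choose hex = n := e.injective (Classical.choose_spec hex)
      have h2 : y (e n) = (b (u n) : k') ⊗ₜ[k] v (e n) := by
        rw [hy]
        simp only [dif_pos hex, hch]
      have h3 := congrArg (fun z => auxE k k' (V (e n)) z (u n)) h1
      rw [h2] at h3
      simp only [auxE_tmul, Module.Basis.repr_self, auxE_lTensor] at h3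
      rw [h0] at h3
      simp only [Finsupp.single_eq_same, one_smul, LinearMap.proj_apply, map_zero,
        Finsupp.coe_zero, Pi.zero_apply] at h3
      rw [← hb, Module.Basis.repr_self, Finsupp.single_eq_same, one_smul] at h3
      exact hvne (e n) h3
    -- infinitely many elements in a finite support
    have hmem : ∀ n : ℕ, u n ∈ (auxE k k' (∀ i, V i) x).support := by
      intro n
      rw [Finsupp.mem_support_iff]
      exact key n
    haveI : Infinite ((auxE k k' (∀ i, V i) x).support : Set ι) :=
      Infinite.of_injective (fun n => ⟨u n, hmem n⟩)
        (fun a b hab => u.injective (by simpa using hab))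
    exact not_finite ((auxE k k' (∀ i, V i) x).support : Set ι)
end
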